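/- For a Leonard system of dual q-Hahn type with parameter sequence (a, a*, b, b*, c, r; q, d), the intersection numbers computed from the standard formulas b_i = φ_{i+1}·∏_{j<i}(θ*_i-θ*_j)/∏_{j≤i}(θ*_{i+1}-θ*_j) and the analogous formula for c_i simplify to b_i = b(1 - q^{i-d})(1 - r q^{i+1}) and c_i = (1 - q^i)(c - b r q^{i-d}). -/

import Mathlib

/-- Intersection numbers of a dual `q`-Hahn Leonard system:
`b_i = b(1-q^{i-d})(1-rq^{i+1})` and `c_i = (1-q^i)(c - brq^{i-d})`. -/
theorem dual_qHahn_intersection_numbers (q : ℂ) (hq : q ≠ 0) (d : ℕ)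
    (hqd : ∀ m : ℕ, 1 ≤ m → m ≤ d → q ^ m ≠ 1)
    (a as b bs c r : ℂ) (hb : b ≠ 0) (hbs : bs ≠ 0) (hc : c ≠ 0) (hr : r ≠ 0)
    (hr1 : ∀ m : ℕ, 1 ≤ m → m ≤ d → r * q ^ m ≠ 1)
    (hr2 : ∀ m : ℕ, 1 ≤ m → m ≤ d → c * b⁻¹ * r⁻¹ * q ^ ((m : ℤ) - 1) ≠ 1)
    (θs φ ϕ : ℕ → ℂ)
    (hθs : ∀ j, θs j = as + bs * q ^ (-(j : ℤ)))
    (hφ : ∀ j, φ j = b * bs * q ^ (1 - 2 * (j : ℤ)) * (1 - q ^ j)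
        * (1 - q ^ ((j : ℤ) - d - 1)) * (1 - r * q ^ j))
    (hϕ : ∀ j, ϕ j = c * bs * q ^ ((d : ℤ) + 1 - 2 * j) * (1 - q ^ j)
        * (1 - q ^ ((j : ℤ) - d - 1)) * (1 - b * r * c⁻¹ * q ^ ((j : ℤ) - d))) :
    (∀ i : ℕ, i < d →
      φ (i + 1) * (∏ j ∈ Finset.range i, (θs i - θs j))
          / (∏ j ∈ Finset.range (i + 1), (θs (i + 1) - θs j))
        = b * (1 - q ^ ((i : ℤ) - d)) * (1 - r * q ^ (i + 1))) ∧
    (∀ i : ℕ, 1 ≤ i → i ≤ d →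
      ϕ i * (∏ j ∈ Finset.Icc (i + 1) d, (θs i - θs j))
          / (∏ j ∈ Finset.Icc i d, (θs (i - 1) - θs j))
        = (1 - q ^ i) * (c - b * r * q ^ ((i : ℤ) - d))) := by
  -- turn integer powers into quotients of natural powers
  have key : ∀ (e : ℤ) (m n : ℕ), e = (m : ℤ) - n → q ^ e = q ^ m / q ^ n := by
    intro e m n h
    rw [h, zpow_sub₀ hq, zpow_natCast, zpow_natCast]
  -- the dual eigenvalues are pairwise distinct (within distance d)
  have hθne : ∀ m n : ℕ, m < n → n ≤ m + d → θs m ≠ θs n := by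
    intro m n hmn hnd h
    rw [hθs, hθs] at h
    have h2 : q ^ (-(m : ℤ)) = q ^ (-(n : ℤ)) :=
      mul_left_cancel₀ hbs (by linear_combination h)
    have h5 : q ^ ((n : ℤ) - m) * q ^ (-(n : ℤ)) = 1 * q ^ (-(n : ℤ)) := by
      rw [← zpow_add₀ hq, one_mul, show (n : ℤ) - m + -n = -(m : ℤ) by ring]
      exact h2
    have h4 := mul_right_cancel₀ (zpow_ne_zero _ hq) h5
    apply hqd (n - m) (by omega) (by omega)
    rw [← zpow_natCast q (n - m), show ((n - m : ℕ) : ℤ) = (n : ℤ) - m by omega]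
    exact h4
  -- shifting both indices by one multiplies the difference by q⁻¹
  have hstep : ∀ m n : ℕ, θs m - θs n = q * (θs (m + 1) - θs (n + 1)) := by
    intro m n
    rw [hθs, hθs, hθs, hθs]
    push_cast
    rw [show q ^ (-((m : ℤ) + 1)) = q⁻¹ * q ^ (-(m : ℤ)) by
          rw [← zpow_neg_one q, ← zpow_add₀ hq]; congr 1; ring,
        show q ^ (-((n : ℤ) + 1)) = q⁻¹ * q ^ (-(n : ℤ)) by
          rw [← zpow_neg_one q, ← zpow_add₀ hq]; congr 1; ring]
    field_simp
    ring
  constructor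
  · -- the b_i formula
    intro i hid
    have hP : (∏ j ∈ Finset.range (i + 1), (θs (i + 1) - θs j))
        = ((θs (i + 1) - θs 0) * (q⁻¹) ^ i) * ∏ j ∈ Finset.range i, (θs i - θs j) := by
      rw [Finset.prod_range_succ']
      have hcg : ∀ j ∈ Finset.range i, (θs (i + 1) - θs (j + 1)) = q⁻¹ * (θs i - θs j) := by
        intro j _
        rw [hstep i j]
        field_simp
      rw [Finset.prod_congr rfl hcg, Finset.prod_mul_distrib, Finset.prod_const,
        Finset.card_range]
      ring
    have hPne : (∏ j ∈ Finset.range i, (θs i - θs j)) ≠ 0 := by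
      apply Finset.prod_ne_zero_iff.mpr
      intro j hj
      rw [Finset.mem_range] at hj
      exact sub_ne_zero_of_ne (hθne j i hj (by omega)).symm
    rw [hP, mul_div_mul_right _ _ hPne]
    have hC : (θs (i + 1) - θs 0) * (q⁻¹) ^ i ≠ 0 :=
      mul_ne_zero (sub_ne_zero_of_ne (hθne 0 (i + 1) (by omega) (by omega)).symm)
        (pow_ne_zero _ (inv_ne_zero hq))
    rw [div_eq_iff hC, hφ, hθs (i + 1), hθs 0,
      key (1 - 2 * ((i + 1 : ℕ) : ℤ)) 1 (2 * (i + 1)) (by push_cast; ring),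
      key (((i + 1 : ℕ) : ℤ) - d - 1) (i + 1) (d + 1) (by push_cast; ring),
      key ((i : ℤ) - d) i d (by push_cast; ring),
      key (-((i + 1 : ℕ) : ℤ)) 0 (i + 1) (by push_cast; ring),
      key (-((0 : ℕ) : ℤ)) 0 0 (by norm_num)]
    have hne1 : (q : ℂ) ^ (i + 1) ≠ 0 := pow_ne_zero _ hq
    have hne2 : (q : ℂ) ^ (d + 1) ≠ 0 := pow_ne_zero _ hq
    simp only [inv_pow]
    field_simp
    ring
  · -- the c_i formula
    intro i hi1 hid
    obtain ⟨k, rfl⟩ : ∃ k, i = k + 1 := ⟨i - 1, by omega⟩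
    obtain ⟨e, rfl⟩ : ∃ e, d = (k + 1) + e := ⟨d - (k + 1), by omega⟩
    simp only [Nat.add_sub_cancel]
    rw [show Finset.Icc (k + 1 + 1) (k + 1 + e) = Finset.Ico (k + 1 + 1) (k + 1 + e + 1)
          from (Finset.Ico_add_one_right_eq_Icc _ _).symm,
        show Finset.Icc (k + 1) (k + 1 + e) = Finset.Ico (k + 1) (k + 1 + e + 1)
          from (Finset.Ico_add_one_right_eq_Icc _ _).symm,
        Finset.prod_Ico_eq_prod_range, Finset.prod_Ico_eq_prod_range,
        show k + 1 + e + 1 - (k + 1 + 1) = e by omega,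
        show k + 1 + e + 1 - (k + 1) = e + 1 by omega]
    have h5 : ∀ j : ℕ, θs k - θs (k + 1 + j) = q * (θs (k + 1) - θs (k + 1 + 1 + j)) := by
      intro j
      have := hstep k (k + 1 + j)
      rw [show k + 1 + j + 1 = k + 1 + 1 + j by omega] at this
      exact this
    have hD : (∏ j ∈ Finset.range (e + 1), (θs k - θs (k + 1 + j)))
        = (q ^ e * (q * (θs (k + 1) - θs (k + 1 + 1 + e))))
          * ∏ j ∈ Finset.range e, (θs (k + 1) - θs (k + 1 + 1 + j)) := by
      rw [Finset.prod_range_succ, h5 e]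
      have hcg : ∀ j ∈ Finset.range e,
          (θs k - θs (k + 1 + j)) = q * (θs (k + 1) - θs (k + 1 + 1 + j)) := fun j _ => h5 j
      rw [Finset.prod_congr rfl hcg, Finset.prod_mul_distrib, Finset.prod_const,
        Finset.card_range]
      ring
    have hNne : (∏ j ∈ Finset.range e, (θs (k + 1) - θs (k + 1 + 1 + j))) ≠ 0 := by
      apply Finset.prod_ne_zero_iff.mpr
      intro j hj
      rw [Finset.mem_range] at hj
      exact sub_ne_zero_of_ne (hθne (k + 1) (k + 1 + 1 + j) (by omega) (by omega))
    rw [hD, mul_div_mul_right _ _ hNne]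
    have hC : q ^ e * (q * (θs (k + 1) - θs (k + 1 + 1 + e))) ≠ 0 :=
      mul_ne_zero (pow_ne_zero _ hq)
        (mul_ne_zero hq
          (sub_ne_zero_of_ne (hθne (k + 1) (k + 1 + 1 + e) (by omega) (by omega))))
    rw [div_eq_iff hC, hϕ, hθs (k + 1), hθs (k + 1 + 1 + e),
      key (((k + 1 + e : ℕ) : ℤ) + 1 - 2 * ((k + 1 : ℕ) : ℤ)) (k + 1 + e + 1) (2 * (k + 1))
        (by push_cast; ring),
      key (((k + 1 : ℕ) : ℤ) - (k + 1 + e : ℕ) - 1) 0 (e + 1) (by push_cast; ring),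
      key (((k + 1 : ℕ) : ℤ) - (k + 1 + e : ℕ)) 0 e (by push_cast; ring),
      key (-((k + 1 : ℕ) : ℤ)) 0 (k + 1) (by push_cast; ring),
      key (-((k + 1 + 1 + e : ℕ) : ℤ)) 0 (k + 1 + 1 + e) (by push_cast; ring)]
    have hne1 : (q : ℂ) ^ (k + 1) ≠ 0 := pow_ne_zero _ hq
    field_simp
    ring
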